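/- Let a = (a₁, …, aₙ) and b = (b₁, …, bₙ) be positive n-vectors with 0 < m₁ ≤ aᵢ ≤ M₁ and 0 < m₂ ≤ bᵢ ≤ M₂ for all i ∈ {1, …, n}. Then (Σᵢ aᵢ²)/(Σᵢ aᵢbᵢ) − (Σᵢ aᵢbᵢ)/(Σᵢ bᵢ²) ≤ ( (M₁/m₂)^{1/2} − (m₁/M₂)^{1/2} )². -/

import Mathlib

open Finset

/-- a complement of Cauchy's inequality: if `0 < m₁ ≤ aᵢ ≤ M₁` and
`0 < m₂ ≤ bᵢ ≤ M₂` for all `i`, then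
`(Σ aᵢ²)/(Σ aᵢbᵢ) - (Σ aᵢbᵢ)/(Σ bᵢ²) ≤ (√(M₁/m₂) - √(m₁/M₂))²`. -/
theorem complement_cauchy_inequality
    {n : ℕ} (hn : 1 ≤ n) (a b : Fin n → ℝ) (m₁ M₁ m₂ M₂ : ℝ)
    (hm₁ : 0 < m₁) (hm₂ : 0 < m₂)
    (ha : ∀ i, m₁ ≤ a i ∧ a i ≤ M₁) (hb : ∀ i, m₂ ≤ b i ∧ b i ≤ M₂) :
    (∑ i : Fin n, (a i) ^ 2) / (∑ i : Fin n, a i * b i)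
        - (∑ i : Fin n, a i * b i) / (∑ i : Fin n, (b i) ^ 2)
      ≤ (Real.sqrt (M₁ / m₂) - Real.sqrt (m₁ / M₂)) ^ 2 := by
  have i0 : Fin n := ⟨0, hn⟩
  have hM₁ : 0 < M₁ := lt_of_lt_of_le hm₁ (le_trans (ha i0).1 (ha i0).2)
  have hM₂ : 0 < M₂ := lt_of_lt_of_le hm₂ (le_trans (hb i0).1 (hb i0).2)
  set m := m₁ / M₂ with hmdef
  set M := M₁ / m₂ with hMdef
  have hm : 0 < m := div_pos hm₁ hM₂
  have hM : 0 < M := div_pos hM₁ hm₂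
  set S := ∑ i : Fin n, a i * b i with hSdef
  set A := ∑ i : Fin n, (a i) ^ 2 with hAdef
  set B := ∑ i : Fin n, (b i) ^ 2 with hBdef
  have hSpos : 0 < S := Finset.sum_pos
    (fun i _ => mul_pos (lt_of_lt_of_le hm₁ (ha i).1) (lt_of_lt_of_le hm₂ (hb i).1))
    ⟨i0, mem_univ i0⟩
  have hBpos : 0 < B := Finset.sum_pos
    (fun i _ => pow_pos (lt_of_lt_of_le hm₂ (hb i).1) 2) ⟨i0, mem_univ i0⟩
  -- key summed inequality
  have key : A + m * M * B ≤ (m + M) * S := by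
    have hpt : ∀ i ∈ Finset.univ (α := Fin n),
        (a i) ^ 2 + m * M * (b i) ^ 2 ≤ (m + M) * (a i * b i) := by
      intro i _
      have hb0 : 0 < b i := lt_of_lt_of_le hm₂ (hb i).1
      have h1 : m * b i ≤ a i := by
        have : m * b i ≤ m * M₂ := mul_le_mul_of_nonneg_left (hb i).2 hm.le
        have h2 : m * M₂ = m₁ := by rw [hmdef, div_mul_cancel₀ _ hM₂.ne']
        linarith [(ha i).1]
      have h2 : a i ≤ M * b i := by
        have : M * m₂ ≤ M * b i := mul_le_mul_of_nonneg_left (hb i).1 hM.le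
        have h3 : M * m₂ = M₁ := by rw [hMdef, div_mul_cancel₀ _ hm₂.ne']
        linarith [(ha i).2]
      nlinarith [mul_nonneg (sub_nonneg.2 h1) (sub_nonneg.2 h2)]
    have := Finset.sum_le_sum hpt
    simpa [Finset.sum_add_distrib, Finset.mul_sum, hAdef, hBdef, hSdef] using this
  -- A/S ≤ (m+M) - m*M*B/S
  have h4 : A / S ≤ (m + M) - m * M * B / S := by
    rw [div_le_iff₀ hSpos, sub_mul]
    have h5 : m * M * B / S * S = m * M * B := div_mul_cancel₀ _ hSpos.ne'
    rw [h5]; linarith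
  -- AM-GM
  have hx : 0 ≤ m * M * B / S := by positivity
  have hy : 0 ≤ S / B := by positivity
  have hsq1 : Real.sqrt (m * M * B / S) ^ 2 = m * M * B / S := Real.sq_sqrt hx
  have hsq2 : Real.sqrt (S / B) ^ 2 = S / B := Real.sq_sqrt hy
  have hprod : Real.sqrt (m * M * B / S) * Real.sqrt (S / B) = Real.sqrt (m * M) := by
    rw [← Real.sqrt_mul hx]
    congr 1
    field_simp
  have hamgm : 2 * Real.sqrt (m * M) ≤ m * M * B / S + S / B := by
    have h := two_mul_le_add_sq (Real.sqrt (m * M * B / S)) (Real.sqrt (S / B))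
    rw [mul_assoc, hprod] at h
    linarith [hsq1, hsq2, h]
  -- RHS expansion
  have hRHS : (Real.sqrt M - Real.sqrt m) ^ 2 = M + m - 2 * Real.sqrt (m * M) := by
    rw [Real.sqrt_mul hm.le]
    have e1 := Real.sq_sqrt hm.le
    have e2 := Real.sq_sqrt hM.le
    nlinarith [e1, e2]
  rw [hRHS]
  linarith
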